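/- Let t be even and let R be a partition of Z_t into t/4 blocks of size 4 (requiring 4 | t). For each i ∈ Z_8 with binary representation (j_2 j_3 j_4), define R_i as the set containing, for each block {x_1,x_2,x_3,x_4} of R, the two quadruples {(x_1,0),(x_2,j_2),(x_3,j_3),(x_4,j_4)} and {(x_1,1),(x_2,j_2+1),(x_3,j_3+1),(x_4,j_4+1)} (second coordinates mod 2). Then each R_i is a parallel class of Z_t × Z_2: its quadruples are pairwise disjoint with union Z_t × Z_2; moreover R_i and R_j are disjoint for i ≠ j. -/

import Mathlib

lemma quad_sort {t : ℕ} (B : Finset (Fin t)) (h : B.card = 4) :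
    ∃ x1 x2 x3 x4 : Fin t, x1 < x2 ∧ x2 < x3 ∧ x3 < x4 ∧ B = {x1, x2, x3, x4} := by
  have hl : (B.sort (· ≤ ·)).length = 4 := by rw [Finset.length_sort]; exact h
  have hs := List.sortedLT_iff_pairwise.mp B.sortedLT_sort
  have hT := Finset.sort_toFinset B (· ≤ ·)
  rcases hL : B.sort (· ≤ ·) with _|⟨a, _|⟨b', _|⟨c, _|⟨d, _|⟨e,l⟩⟩⟩⟩⟩ <;>
    simp [hL] at hl
  rw [hL] at hs hT
  simp [List.pairwise_cons] at hs
  refine ⟨a, b', c, d, by tauto, by tauto, by tauto, ?_⟩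
  rw [← hT]; simp

lemma quad_unique {t : ℕ} {x1 x2 x3 x4 y1 y2 y3 y4 : Fin t}
    (h12 : x1 < x2) (h23 : x2 < x3) (h34 : x3 < x4)
    (g12 : y1 < y2) (g23 : y2 < y3) (g34 : y3 < y4)
    (hE : ({x1, x2, x3, x4} : Finset (Fin t)) = {y1, y2, y3, y4}) :
    x1 = y1 ∧ x2 = y2 ∧ x3 = y3 ∧ x4 = y4 := by
  have hx : ([x1,x2,x3,x4] : List (Fin t)).Pairwise (· < ·) := by
    simp [List.pairwise_cons]
    exact ⟨⟨h12, h12.trans h23, (h12.trans h23).trans h34⟩, ⟨h23, h23.trans h34⟩, h34⟩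
  have hy : ([y1,y2,y3,y4] : List (Fin t)).Pairwise (· < ·) := by
    simp [List.pairwise_cons]
    exact ⟨⟨g12, g12.trans g23, (g12.trans g23).trans g34⟩, ⟨g23, g23.trans g34⟩, g34⟩
  have hperm : ([x1,x2,x3,x4] : List (Fin t)).Perm [y1,y2,y3,y4] := by
    apply List.perm_of_nodup_nodup_toFinset_eq hx.nodup hy.nodup
    simpa using hE
  have := List.Perm.eq_of_pairwise (fun _ _ _ _ h1 h2 => absurd (h1.trans h2) (lt_irrefl _)) hx hy hperm
  simp at this
  exact this

lemma quad_mem_fst {t : ℕ} {x1 x2 x3 x4 : Fin t} {c1 c2 c3 c4 : ZMod 2}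
    {p : Fin t × ZMod 2}
    (hp : p ∈ ({(x1,c1),(x2,c2),(x3,c3),(x4,c4)} : Finset (Fin t × ZMod 2))) :
    p.1 ∈ ({x1,x2,x3,x4} : Finset (Fin t)) := by
  simp at hp ⊢
  rcases hp with h|h|h|h <;> subst h <;> simp

lemma quad_disj {t : ℕ} {x1 x2 x3 x4 : Fin t}
    (h12 : x1 ≠ x2) (h13 : x1 ≠ x3) (h14 : x1 ≠ x4)
    (h23 : x2 ≠ x3) (h24 : x2 ≠ x4) (h34 : x3 ≠ x4)
    (c1 c2 c3 c4 : ZMod 2) :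
    Disjoint ({(x1,c1),(x2,c2),(x3,c3),(x4,c4)} : Finset (Fin t × ZMod 2))
      {(x1,c1+1),(x2,c2+1),(x3,c3+1),(x4,c4+1)} := by
  have key : ∀ a : ZMod 2, a ≠ a + 1 := by decide
  rw [Finset.disjoint_left]
  rintro ⟨y, s⟩ hp hp'
  simp [Prod.ext_iff] at hp hp'
  rcases hp with ⟨h,h'⟩|⟨h,h'⟩|⟨h,h'⟩|⟨h,h'⟩ <;> subst h <;> subst h' <;>
    rcases hp' with ⟨h,h'⟩|⟨h,h'⟩|⟨h,h'⟩|⟨h,h'⟩ <;> first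
      | exact key _ h'
      | exact h12 h.symm | exact h13 h.symm | exact h14 h.symm
      | exact h23 h.symm | exact h24 h.symm | exact h34 h.symm
      | exact h12 h | exact h13 h | exact h14 h
      | exact h23 h | exact h24 h | exact h34 h

lemma quad_eq_bits {t : ℕ} {x1 x2 x3 x4 : Fin t}
    (h12 : x1 ≠ x2) (h13 : x1 ≠ x3) (h14 : x1 ≠ x4)
    (h23 : x2 ≠ x3) (h24 : x2 ≠ x4) (h34 : x3 ≠ x4)
    {c1 c2 c3 c4 d1 d2 d3 d4 : ZMod 2}
    (h : ({(x1,c1),(x2,c2),(x3,c3),(x4,c4)} : Finset (Fin t × ZMod 2))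
        = {(x1,d1),(x2,d2),(x3,d3),(x4,d4)}) :
    c1 = d1 ∧ c2 = d2 ∧ c3 = d3 ∧ c4 = d4 := by
  have m1 : (x1,c1) ∈ ({(x1,d1),(x2,d2),(x3,d3),(x4,d4)} : Finset (Fin t × ZMod 2)) := by
    rw [← h]; simp
  have m2 : (x2,c2) ∈ ({(x1,d1),(x2,d2),(x3,d3),(x4,d4)} : Finset (Fin t × ZMod 2)) := by
    rw [← h]; simp
  have m3 : (x3,c3) ∈ ({(x1,d1),(x2,d2),(x3,d3),(x4,d4)} : Finset (Fin t × ZMod 2)) := by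
    rw [← h]; simp
  have m4 : (x4,c4) ∈ ({(x1,d1),(x2,d2),(x3,d3),(x4,d4)} : Finset (Fin t × ZMod 2)) := by
    rw [← h]; simp
  simp [Prod.ext_iff, h12, h13, h14, h23, h24, h34, h12.symm, h13.symm, h14.symm,
    h23.symm, h24.symm, h34.symm] at m1 m2 m3 m4
  exact ⟨m1, m2, m3, m4⟩

/-- Given a partition `R` of `Z_t` into blocks of size 4 and bits `b = (j₂,j₃,j₄)`,
the class `R_b` contains, for each block `{x₁,x₂,x₃,x₄}` of `R` (listed in
increasing order), the two quadruples `{(x₁,0),(x₂,j₂),(x₃,j₃),(x₄,j₄)}` and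
`{(x₁,1),(x₂,j₂+1),(x₃,j₃+1),(x₄,j₄+1)}`. -/
def doubledClass (t : ℕ) (R : Finset (Finset (Fin t))) (b : Fin 3 → ZMod 2) :
    Set (Finset (Fin t × ZMod 2)) :=
  {Q | ∃ B ∈ R, ∃ x1 x2 x3 x4 : Fin t, x1 < x2 ∧ x2 < x3 ∧ x3 < x4 ∧
    B = {x1, x2, x3, x4} ∧
    (Q = {(x1, 0), (x2, b 0), (x3, b 1), (x4, b 2)} ∨
     Q = {(x1, 1), (x2, b 0 + 1), (x3, b 1 + 1), (x4, b 2 + 1)})}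

/-- If `R` is a partition of `Z_t` (with `4 ∣ t`) into blocks of size 4, then each
`R_b` (for `b ∈ Z_2³`, the binary representation of `i ∈ Z_8`) is a parallel class
of `Z_t × Z_2`: its quadruples are pairwise disjoint with union `Z_t × Z_2`;
moreover distinct classes `R_b`, `R_{b'}` are disjoint. -/
theorem doubling_type_S (t : ℕ) (h4 : 4 ∣ t) (R : Finset (Finset (Fin t)))
    (hblocks : ∀ B ∈ R, B.card = 4)
    (hdisj : ∀ B ∈ R, ∀ B' ∈ R, B ≠ B' → Disjoint B B')
    (hcover : ∀ x : Fin t, ∃ B ∈ R, x ∈ B) :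
    (∀ b : Fin 3 → ZMod 2, ∀ Q ∈ doubledClass t R b, ∀ Q' ∈ doubledClass t R b,
      Q ≠ Q' → Disjoint Q Q') ∧
    (∀ b : Fin 3 → ZMod 2, ∀ p : Fin t × ZMod 2, ∃ Q ∈ doubledClass t R b, p ∈ Q) ∧
    (∀ b b' : Fin 3 → ZMod 2, b ≠ b' →
      Disjoint (doubledClass t R b) (doubledClass t R b')) := by
  refine ⟨?_, ?_, ?_⟩
  · -- pairwise disjoint within one class
    intro b Q hQ Q' hQ' hne
    obtain ⟨B, hB, x1, x2, x3, x4, h12, h23, h34, hBx, hQeq⟩ := hQ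
    obtain ⟨B', hB', y1, y2, y3, y4, g12, g23, g34, hBy, hQ'eq⟩ := hQ'
    by_cases hBB : B = B'
    · subst hBB
      obtain ⟨e1, e2, e3, e4⟩ :=
        quad_unique h12 h23 h34 g12 g23 g34 (hBx.symm.trans hBy)
      subst e1; subst e2; subst e3; subst e4
      have n12 : x1 ≠ x2 := h12.ne
      have n13 : x1 ≠ x3 := (h12.trans h23).ne
      have n14 : x1 ≠ x4 := ((h12.trans h23).trans h34).ne
      have n23 : x2 ≠ x3 := h23.ne
      have n24 : x2 ≠ x4 := (h23.trans h34).ne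
      have n34 : x3 ≠ x4 := h34.ne
      rcases hQeq with h|h <;> rcases hQ'eq with h'|h'
      · exact absurd (h.trans h'.symm) hne
      · rw [h, h']
        simpa using quad_disj n12 n13 n14 n23 n24 n34 0 (b 0) (b 1) (b 2)
      · rw [h, h']
        simpa using (quad_disj n12 n13 n14 n23 n24 n34 0 (b 0) (b 1) (b 2)).symm
      · exact absurd (h.trans h'.symm) hne
    · rw [Finset.disjoint_left]
      intro p hpQ hpQ'
      have hf : p.1 ∈ B := by
        rcases hQeq with h|h <;> (rw [h] at hpQ; rw [hBx]; exact quad_mem_fst hpQ)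
      have hf' : p.1 ∈ B' := by
        rcases hQ'eq with h|h <;> (rw [h] at hpQ'; rw [hBy]; exact quad_mem_fst hpQ')
      exact Finset.disjoint_left.mp (hdisj B hB B' hB' hBB) hf hf'
  · -- cover
    rintro b ⟨x, s⟩
    obtain ⟨B, hB, hxB⟩ := hcover x
    obtain ⟨x1, x2, x3, x4, h12, h23, h34, hBx⟩ := quad_sort B (hblocks B hB)
    have hx : x ∈ ({x1, x2, x3, x4} : Finset (Fin t)) := hBx ▸ hxB
    have key : ∀ s a : ZMod 2, s = a ∨ s = a + 1 := by decide
    simp at hx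
    rcases hx with h|h|h|h <;> subst h
    · rcases key s 0 with h|h <;> subst h
      · exact ⟨_, ⟨B, hB, x, x2, x3, x4, h12, h23, h34, hBx, Or.inl rfl⟩, by simp⟩
      · exact ⟨_, ⟨B, hB, x, x2, x3, x4, h12, h23, h34, hBx, Or.inr rfl⟩, by simp⟩
    · rcases key s (b 0) with h|h <;> subst h
      · exact ⟨_, ⟨B, hB, x1, x, x3, x4, h12, h23, h34, hBx, Or.inl rfl⟩, by simp⟩
      · exact ⟨_, ⟨B, hB, x1, x, x3, x4, h12, h23, h34, hBx, Or.inr rfl⟩, by simp⟩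
    · rcases key s (b 1) with h|h <;> subst h
      · exact ⟨_, ⟨B, hB, x1, x2, x, x4, h12, h23, h34, hBx, Or.inl rfl⟩, by simp⟩
      · exact ⟨_, ⟨B, hB, x1, x2, x, x4, h12, h23, h34, hBx, Or.inr rfl⟩, by simp⟩
    · rcases key s (b 2) with h|h <;> subst h
      · exact ⟨_, ⟨B, hB, x1, x2, x3, x, h12, h23, h34, hBx, Or.inl rfl⟩, by simp⟩
      · exact ⟨_, ⟨B, hB, x1, x2, x3, x, h12, h23, h34, hBx, Or.inr rfl⟩, by simp⟩
  · -- distinct classes are disjoint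
    intro b b' hbb
    rw [Set.disjoint_left]
    rintro Q ⟨B, hB, x1, x2, x3, x4, h12, h23, h34, hBx, hQ⟩
      ⟨B', hB', y1, y2, y3, y4, g12, g23, g34, hBy, hQ'⟩
    have hm : ∃ c, (x1, c) ∈ Q := by
      rcases hQ with h|h
      · exact ⟨0, by rw [h]; simp⟩
      · exact ⟨1, by rw [h]; simp⟩
    obtain ⟨c, hm⟩ := hm
    have hf' : x1 ∈ B' := by
      rcases hQ' with h|h <;> (rw [h] at hm; rw [hBy]; exact quad_mem_fst hm)
    have hf : x1 ∈ B := by rw [hBx]; simp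
    have hBB : B = B' := by
      by_contra hne
      exact Finset.disjoint_left.mp (hdisj B hB B' hB' hne) hf hf'
    subst hBB
    obtain ⟨e1, e2, e3, e4⟩ :=
      quad_unique h12 h23 h34 g12 g23 g34 (hBx.symm.trans hBy)
    subst e1; subst e2; subst e3; subst e4
    have n12 : x1 ≠ x2 := h12.ne
    have n13 : x1 ≠ x3 := (h12.trans h23).ne
    have n14 : x1 ≠ x4 := ((h12.trans h23).trans h34).ne
    have n23 : x2 ≠ x3 := h23.ne
    have n24 : x2 ≠ x4 := (h23.trans h34).ne
    have n34 : x3 ≠ x4 := h34.ne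
    rcases hQ with h|h <;> rcases hQ' with h'|h' <;>
      obtain ⟨k1, k2, k3, k4⟩ := quad_eq_bits n12 n13 n14 n23 n24 n34 (h.symm.trans h')
    · exact hbb (funext fun i => by fin_cases i <;> assumption)
    · exact absurd k1 (by decide)
    · exact absurd k1 (by decide)
    · refine hbb (funext fun i => ?_)
      fin_cases i
      · exact add_right_cancel k2
      · exact add_right_cancel k3
      · exact add_right_cancel k4
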